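/- Let A be an n×n complex matrix of index k and let m ≥ 1 be an integer. Then an n×n complex matrix X satisfies AX = (A⊕)^m A^m P_{A^m} and R(X) ⊆ R(A^k) if and only if X = A^{#_m}; in particular this system is consistent and has a unique solution. -/
import Mathlib


open Matrix

/-- `X` is the Moore–Penrose inverse of `A` (four Penrose equations). -/
def MoorePenroseOf {n : ℕ} (A X : Matrix (Fin n) (Fin n) ℂ) : Prop :=
  A * X * A = A ∧ X * A * X = X ∧ (A * X)ᴴ = A * X ∧ (X * A)ᴴ = X * A

/-- Column space of a square complex matrix. -/
noncomputable def colSpace {n : ℕ} (A : Matrix (Fin n) (Fin n) ℂ) : Submodule ℂ (Fin n → ℂ) :=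
  LinearMap.range A.mulVecLin

/-- Null space of a square complex matrix. -/
noncomputable def nullSpace {n : ℕ} (A : Matrix (Fin n) (Fin n) ℂ) : Submodule ℂ (Fin n → ℂ) :=
  LinearMap.ker A.mulVecLin

/-- `k` is the index of `A`: the smallest nonnegative integer with
`rank(A^k) = rank(A^(k+1))`. -/
def HasIndex {n : ℕ} (A : Matrix (Fin n) (Fin n) ℂ) (k : ℕ) : Prop :=
  (A ^ k).rank = (A ^ (k + 1)).rank ∧ ∀ j < k, (A ^ j).rank ≠ (A ^ (j + 1)).rank

/-- `X` is the core-EP inverse of `A` (where `k = Ind(A)`): `XAX = X` and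
`R(X) = R(Xᴴ) = R(A^k)`. -/
def IsCoreEP {n : ℕ} (A X : Matrix (Fin n) (Fin n) ℂ) (k : ℕ) : Prop :=
  X * A * X = X ∧ colSpace X = colSpace (A ^ k) ∧ colSpace Xᴴ = colSpace (A ^ k)

lemma colSpace_mul {n : ℕ} (A B : Matrix (Fin n) (Fin n) ℂ) :
    colSpace (A * B) = (colSpace B).map A.mulVecLin := by
  simp [colSpace, Matrix.mulVecLin_mul, LinearMap.range_comp]

lemma colSpace_mul_le {n : ℕ} (A B : Matrix (Fin n) (Fin n) ℂ) :
    colSpace (A * B) ≤ colSpace A := by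
  rw [colSpace_mul]
  rintro x ⟨y, -, rfl⟩
  exact ⟨y, rfl⟩

lemma mulVec_mem_colSpace {n : ℕ} (B : Matrix (Fin n) (Fin n) ℂ) (v : Fin n → ℂ) :
    B.mulVec v ∈ colSpace B := ⟨v, rfl⟩

lemma mul_eq_of_colSpace_le {n : ℕ} {E B : Matrix (Fin n) (Fin n) ℂ}
    (hE : E * E = E) (h : colSpace B ≤ colSpace E) : E * B = B := by
  have key : ∀ v, (E * B).mulVec v = B.mulVec v := by
    intro v
    obtain ⟨w, hw⟩ := h (mulVec_mem_colSpace B v)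
    simp only [Matrix.mulVecLin_apply] at hw
    rw [← Matrix.mulVec_mulVec, ← hw, Matrix.mulVec_mulVec, hE, hw]
  ext i j
  have := congrFun (key (Pi.single j 1)) i
  simpa [Matrix.mulVec_single] using this

/-- the system `AX = (A⊕)^m A^m P_{A^m}`, `R(X) ⊆ R(A^k)`
has `A^{#_m}` as its unique solution. -/
theorem stmt_13 {n k m : ℕ} (hm : 1 ≤ m)
    (A CEP AmDag : Matrix (Fin n) (Fin n) ℂ)
    (hInd : HasIndex A k)
    (hCEP : IsCoreEP A CEP k)
    (hMP : MoorePenroseOf (A ^ m) AmDag) :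
    ∀ X : Matrix (Fin n) (Fin n) ℂ,
      (A * X = CEP ^ m * A ^ m * (A ^ m * AmDag) ∧
       colSpace X ≤ colSpace (A ^ k)) ↔
      X = CEP ^ (m + 1) * A ^ m * (A ^ m * AmDag) := by
  obtain ⟨hXAX, hcol, -⟩ := hCEP
  -- colSpace (A ^ (k+1)) = colSpace (A ^ k)
  have hsub : colSpace (A ^ (k + 1)) ≤ colSpace (A ^ k) := by
    rw [pow_succ]
    exact colSpace_mul_le _ _
  have hrk : colSpace (A ^ (k + 1)) = colSpace (A ^ k) :=
    Submodule.eq_of_le_of_finrank_eq hsub hInd.1.symm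
  -- CEP * A is idempotent with colSpace CEP ≤ colSpace (CEP * A)
  have hCAidem : (CEP * A) * (CEP * A) = CEP * A := by
    rw [← mul_assoc, hXAX]
  have hCle : colSpace CEP ≤ colSpace (CEP * A) := by
    conv_lhs => rw [← hXAX]
    exact colSpace_mul_le _ _
  -- A * CEP is idempotent with colSpace CEP ≤ colSpace (A * CEP)
  have hACidem : (A * CEP) * (A * CEP) = A * CEP := by
    rw [mul_assoc, ← mul_assoc CEP A CEP, hXAX]
  have hACcol : colSpace (A * CEP) = colSpace (A ^ k) := by
    rw [colSpace_mul, hcol, ← colSpace_mul, ← pow_succ', hrk]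
  have hACle : colSpace CEP ≤ colSpace (A * CEP) := by
    rw [hACcol, ← hcol]
  have hACC : (A * CEP) * CEP = CEP := mul_eq_of_colSpace_le hACidem hACle
  -- A * CEP ^ (m+1) = CEP ^ m
  have hApow : A * CEP ^ (m + 1) = CEP ^ m := by
    obtain ⟨p, rfl⟩ := Nat.exists_eq_add_of_le' hm
    rw [pow_succ' CEP (p + 1), pow_succ' CEP p, ← mul_assoc, ← mul_assoc, hACC]
  intro X
  constructor
  · rintro ⟨hAX, hXle⟩
    have hCAX : (CEP * A) * X = X := by
      refine mul_eq_of_colSpace_le hCAidem ?_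
      exact hXle.trans (by rw [← hcol]; exact hCle)
    calc X = CEP * (A * X) := by rw [← mul_assoc, hCAX]
    _ = CEP ^ (m + 1) * A ^ m * (A ^ m * AmDag) := by
        rw [hAX, pow_succ' CEP m]; simp only [mul_assoc]
  · rintro rfl
    constructor
    · rw [← mul_assoc, ← mul_assoc A (CEP ^ (m + 1)) (A ^ m), hApow]
    · have he : CEP ^ (m + 1) * A ^ m * (A ^ m * AmDag) =
          CEP * (CEP ^ m * A ^ m * (A ^ m * AmDag)) := by
        rw [pow_succ' CEP m]; simp only [mul_assoc]
      rw [he, ← hcol]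
      exact colSpace_mul_le _ _
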